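/- Suppose b k * c (k + 1) < 0 for all k : ZMod p, and (−1)^p * ∏_{k : ZMod p} b k ≠ ∏_{k : ZMod p} c k. Then every absolute nilpotent element x of E^n_{π,τ} satisfies x (l k) = 0 for all k : ZMod p. -/

import Mathlib

/-- The product of the evolution algebra `E_{π,τ}(a)` on a finite type `ι`. -/
noncomputable def evolMul {ι : Type*} [Fintype ι] [DecidableEq ι]
    (π τ : Equiv.Perm ι) (a : ι → ι → ℝ) (x y : ι → ℝ) : ι → ℝ :=
  fun j => ∑ i, x i * y i *
    ((if π i = j then a i (π i) else 0) + (if τ i = j then a i (τ i) else 0))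

/-- along a cycle `l : ZMod p → Fin n` of `τ⁻¹ ∘ π`, if
`b k * c (k+1) < 0` for all `k` and `(−1)^p * ∏ b k ≠ ∏ c k`, then every
absolute nilpotent element `x` of `E^n_{π,τ}` vanishes at all the `l k`. -/
theorem stmt_8 (n p : ℕ) [NeZero p] (π τ : Equiv.Perm (Fin n))
    (a : Fin n → Fin n → ℝ)
    (l : ZMod p → Fin n) (hl : Function.Injective l)
    (hcyc : ∀ k : ZMod p, τ⁻¹ (π (l k)) = l (k + 1))
    (b c : ZMod p → ℝ)
    (hb : ∀ k, b k = a (l k) (π (l k)))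
    (hc : ∀ k, c k = a (l k) (τ (l k)))
    (hbc : ∀ k : ZMod p, b k * c (k + 1) < 0)
    (hprod : (-1 : ℝ) ^ p * ∏ k : ZMod p, b k ≠ ∏ k : ZMod p, c k) :
    ∀ x : Fin n → ℝ, evolMul π τ a x x = 0 → ∀ k : ZMod p, x (l k) = 0 := by
  intro x hx
  have hc0 : ∀ k : ZMod p, c k ≠ 0 := by
    intro k h
    have h2 := hbc (k - 1)
    rw [sub_add_cancel, h, mul_zero] at h2
    exact lt_irrefl 0 h2
  have htau : ∀ k : ZMod p, τ (l (k + 1)) = π (l k) := by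
    intro k
    rw [← hcyc k]
    simp
  have key : ∀ k : ZMod p, x (l k) ^ 2 * b k + x (l (k + 1)) ^ 2 * c (k + 1) = 0 := by
    intro k
    have h0 := congrFun hx (π (l k))
    simp only [evolMul, Pi.zero_apply] at h0
    rw [Finset.sum_congr rfl (fun i _ => by
      rw [if_congr π.apply_eq_iff_eq rfl rfl,
        if_congr (show τ i = π (l k) ↔ i = l (k + 1) by
          rw [← htau k, τ.apply_eq_iff_eq]) rfl rfl,
        mul_add, mul_ite, mul_zero, mul_ite, mul_zero])] at h0
    rw [Finset.sum_add_distrib, Finset.sum_ite_eq' Finset.univ (l k),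
      Finset.sum_ite_eq' Finset.univ (l (k + 1))] at h0
    simp only [Finset.mem_univ, if_true] at h0
    rw [hb, hc]
    nlinarith [h0]
  by_contra hcon
  push_neg at hcon
  obtain ⟨k0, hk0⟩ := hcon
  set u : ZMod p → ℝ := fun k => x (l k) ^ 2 with hu
  set r : ZMod p → ℝ := fun k => -b k / c (k + 1) with hr
  have hrpos : ∀ k, 0 < r k := by
    intro k
    have hcne := hc0 (k + 1)
    have hre : r k = -(b k * c (k + 1)) / (c (k + 1)) ^ 2 := by
      rw [hr]; field_simp
    rw [hre]
    apply div_pos (by linarith [hbc k]) (by positivity)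
  have hstep : ∀ k, u (k + 1) = u k * r k := by
    intro k
    have hk := key k
    have hcne := hc0 (k + 1)
    rw [hr, hu]
    field_simp
    nlinarith [hk]
  have hiter : ∀ m : ℕ, u (k0 + m) = u k0 * ∏ j ∈ Finset.range m, r (k0 + j) := by
    intro m
    induction m with
    | zero => simp
    | succ m ih =>
      have hcast : ((m + 1 : ℕ) : ZMod p) = (m : ZMod p) + 1 := by push_cast; ring
      rw [hcast, ← add_assoc, hstep, ih, Finset.prod_range_succ, mul_assoc]
  have hup : 0 < u k0 := by
    have := pow_two_pos_of_ne_zero hk0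
    simpa [hu] using this
  have hp1 : ∏ j ∈ Finset.range p, r (k0 + j) = 1 := by
    have h1 := hiter p
    rw [ZMod.natCast_self, add_zero, eq_comm, mul_right_eq_self₀] at h1
    rcases h1 with h1 | h1
    · exact h1
    · exact absurd h1 (ne_of_gt hup)
  have hPall : ∏ k : ZMod p, r k = 1 := by
    rw [← hp1, ← Fin.prod_univ_eq_prod_range (fun j => r (k0 + j)) p]
    refine (Fintype.prod_bijective (fun i : Fin p => k0 + (i : ZMod p)) ?_ _ _ (fun i => rfl)).symm
    rw [Fintype.bijective_iff_injective_and_card]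
    constructor
    · intro i j hij
      have h1 : ((i : ZMod p)) = (j : ZMod p) := add_left_cancel hij
      have hv := congrArg ZMod.val h1
      rwa [ZMod.val_cast_of_lt i.isLt, ZMod.val_cast_of_lt j.isLt, Fin.val_injective.eq_iff] at hv
    · simp [ZMod.card]
  have hprodc : ∏ k : ZMod p, c (k + 1) = ∏ k : ZMod p, c k :=
    Equiv.prod_comp (Equiv.addRight (1 : ZMod p)) c
  have hcprod_ne : ∏ k : ZMod p, c k ≠ 0 :=
    Finset.prod_ne_zero_iff.mpr (fun k _ => hc0 k)
  have hre2 : ∏ k : ZMod p, r k = ((-1 : ℝ) ^ p * ∏ k : ZMod p, b k) / ∏ k : ZMod p, c k := by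
    rw [hr]
    rw [Finset.prod_div_distrib, hprodc]
    congr 1
    calc ∏ k : ZMod p, -b k = ∏ k : ZMod p, (-1 : ℝ) * b k := by simp
    _ = (∏ _k : ZMod p, (-1 : ℝ)) * ∏ k : ZMod p, b k := Finset.prod_mul_distrib
    _ = (-1 : ℝ) ^ p * ∏ k : ZMod p, b k := by
        rw [Finset.prod_const]
        simp [ZMod.card]
  rw [hre2, div_eq_one_iff_eq hcprod_ne] at hPall
  exact hprod hPall
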